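/- For all positive integers k, ∑_{m=1}^{2k+1} (-1)^m * (m-1)!/2^{m-1} * S(2k+1, m) = 0, where S denotes Stirling numbers of the second kind. -/

import Mathlib

/-- Stirling numbers of the second kind. -/
def stirling2 : ℕ → ℕ → ℕ
  | 0, 0 => 1
  | 0, _ + 1 => 0
  | _ + 1, 0 => 0
  | n + 1, k + 1 => (k + 1) * stirling2 n (k + 1) + stirling2 n k

namespace Stirling2Aux

open Finset

lemma stirling2_succ_succ (n m : ℕ) :
    stirling2 (n + 1) (m + 1) = (m + 1) * stirling2 n (m + 1) + stirling2 n m := rfl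

lemma stirling2_zero_right (n : ℕ) : stirling2 n 0 = if n = 0 then 1 else 0 := by
  cases n <;> rfl

lemma stirling2_eq_zero : ∀ {n m : ℕ}, n < m → stirling2 n m = 0
  | 0, m + 1, _ => rfl
  | n + 1, m + 1, h => by
    rw [stirling2_succ_succ, stirling2_eq_zero (show n < m + 1 by omega),
      stirling2_eq_zero (show n < m by omega)]
    ring

/-- The coefficient `(-1)^m m! / 2^m`. -/
def c (m : ℕ) : ℚ := (-1) ^ m * m.factorial / 2 ^ m

/-- `F n = ∑ m, c m * S(n, m)`; its EGF is `2 / (1 + eˣ)`. -/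
def F (n : ℕ) : ℚ := ∑ m ∈ range (n + 1), c m * stirling2 n m

lemma c_zero : c 0 = 1 := by simp [c]

lemma c_succ (m : ℕ) : c (m + 1) = -((m : ℚ) + 1) / 2 * c m := by
  simp only [c, Nat.factorial_succ, pow_succ]
  push_cast
  ring

lemma stirling2_zero_succ (m : ℕ) : stirling2 0 (m + 1) = 0 := rfl

lemma F_zero : F 0 = 1 := by
  simp [F, c_zero]
  rfl

lemma F_eq_sum_range {n N : ℕ} (h : n + 1 ≤ N) :
    ∑ m ∈ range N, c m * stirling2 n m = F n := by
  rw [F]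
  symm
  apply Finset.sum_subset (Finset.range_subset_range.2 h)
  intro m _ hm
  rw [stirling2_eq_zero (by simpa using hm)]
  simp

/-- Classical identity `S(n+1, m+1) = ∑_{k ≤ n} C(n,k) S(k,m)`. -/
lemma stirling2_succ_succ_eq_sum (n : ℕ) : ∀ m : ℕ,
    stirling2 (n + 1) (m + 1) = ∑ k ∈ range (n + 1), n.choose k * stirling2 k m := by
  induction n with
  | zero =>
    intro m
    simp [stirling2_succ_succ, stirling2_zero_succ]
  | succ n ih =>
    have hsplit : ∀ m : ℕ, ∑ k ∈ range (n + 2), (n + 1).choose k * stirling2 k m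
        = (∑ k ∈ range (n + 1), n.choose k * stirling2 k m)
          + ∑ k ∈ range (n + 1), n.choose k * stirling2 (k + 1) m := by
      intro m
      rw [Finset.sum_range_succ' (fun k => (n + 1).choose k * stirling2 k m)]
      have h1 : ∀ k, (n + 1).choose (k + 1) * stirling2 (k + 1) m
          = n.choose k * stirling2 (k + 1) m + n.choose (k + 1) * stirling2 (k + 1) m := by
        intro k
        rw [Nat.choose_succ_succ]
        ring
      rw [Finset.sum_congr rfl fun k _ => h1 k, Finset.sum_add_distrib]
      have h2 : (∑ k ∈ range (n + 1), n.choose (k + 1) * stirling2 (k + 1) m)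
          + (n + 1).choose 0 * stirling2 0 m
          = ∑ k ∈ range (n + 2), n.choose k * stirling2 k m := by
        rw [Finset.sum_range_succ' (fun k => n.choose k * stirling2 k m)]
        simp
      have h3 : ∑ k ∈ range (n + 2), n.choose k * stirling2 k m
          = ∑ k ∈ range (n + 1), n.choose k * stirling2 k m := by
        rw [Finset.sum_range_succ, Nat.choose_succ_self]
        simp
      omega
    intro m
    rw [hsplit]
    match m with
    | 0 =>
      have : ∀ k, stirling2 (k + 1) 0 = 0 := fun k => rfl
      simp only [this, Nat.mul_zero, Finset.sum_const_zero, Nat.add_zero]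
      rw [← ih 0, stirling2_succ_succ, stirling2_succ_succ]
      simp [stirling2_zero_right]
    | j + 1 =>
      have : ∀ k, n.choose k * stirling2 (k + 1) (j + 1)
          = (j + 1) * (n.choose k * stirling2 k (j + 1)) + n.choose k * stirling2 k j := by
        intro k
        rw [stirling2_succ_succ]
        ring
      rw [Finset.sum_congr rfl fun k _ => this k, Finset.sum_add_distrib, ← Finset.mul_sum,
        ← ih (j + 1), ← ih j]
      rw [stirling2_succ_succ (n + 1) (j + 1)]
      ring

/-- The key auxiliary sum: `∑ m, c m (m+1) S(n, m+1) = -2 F n + 2 [n = 0]`. -/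
lemma sum_c_mul_succ (n : ℕ) :
    ∑ m ∈ range (n + 1), c m * ((m : ℚ) + 1) * stirling2 n (m + 1)
      = -2 * F n + 2 * (if n = 0 then 1 else 0) := by
  have h1 : ∀ m : ℕ, c m * ((m : ℚ) + 1) = -2 * c (m + 1) := by
    intro m
    rw [c_succ]
    ring
  calc ∑ m ∈ range (n + 1), c m * ((m : ℚ) + 1) * stirling2 n (m + 1)
      = ∑ m ∈ range (n + 1), -2 * (c (m + 1) * stirling2 n (m + 1)) := by
        refine Finset.sum_congr rfl fun m _ => ?_
        rw [h1]; ring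
    _ = -2 * ∑ m ∈ range (n + 1), c (m + 1) * stirling2 n (m + 1) := by
        rw [Finset.mul_sum]
    _ = -2 * (∑ m ∈ range (n + 2), c m * stirling2 n m - c 0 * stirling2 n 0) := by
        rw [Finset.sum_range_succ' (fun m => c m * stirling2 n m)]
        ring
    _ = -2 * (F n - c 0 * stirling2 n 0) := by rw [F_eq_sum_range (by omega)]
    _ = -2 * F n + 2 * (if n = 0 then 1 else 0) := by
        rw [c_zero, stirling2_zero_right]
        split <;> simp <;> ring

/-- Convolution identity: the EGF `G = ∑ F n xⁿ/n!` satisfies `(1+eˣ)G = 2`. -/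
lemma conv (n : ℕ) :
    ∑ k ∈ range (n + 1), (n.choose k : ℚ) * F k = (if n = 0 then 2 else 0) - F n := by
  have h1 : ∑ k ∈ range (n + 1), (n.choose k : ℚ) * F k
      = ∑ m ∈ range (n + 1), c m * stirling2 (n + 1) (m + 1) := by
    calc ∑ k ∈ range (n + 1), (n.choose k : ℚ) * F k
        = ∑ k ∈ range (n + 1), ∑ m ∈ range (n + 1),
            c m * ((n.choose k : ℚ) * stirling2 k m) := by
          refine Finset.sum_congr rfl fun k hk => ?_
          rw [← F_eq_sum_range (show k + 1 ≤ n + 1 by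
            have := Finset.mem_range.1 hk; omega), Finset.mul_sum]
          exact Finset.sum_congr rfl fun m _ => by ring
      _ = ∑ m ∈ range (n + 1), ∑ k ∈ range (n + 1),
            c m * ((n.choose k : ℚ) * stirling2 k m) := Finset.sum_comm
      _ = ∑ m ∈ range (n + 1), c m * stirling2 (n + 1) (m + 1) := by
          refine Finset.sum_congr rfl fun m _ => ?_
          rw [← Finset.mul_sum]
          congr 1
          exact_mod_cast (congrArg (fun z : ℕ => (z : ℚ))
            (stirling2_succ_succ_eq_sum n m)).symm
  rw [h1]
  have h3 : ∀ m : ℕ, c m * (stirling2 (n + 1) (m + 1) : ℚ)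
      = c m * ((m : ℚ) + 1) * stirling2 n (m + 1) + c m * stirling2 n m := by
    intro m
    rw [stirling2_succ_succ]
    push_cast
    ring
  rw [Finset.sum_congr rfl fun m _ => h3 m, Finset.sum_add_distrib, sum_c_mul_succ]
  show -2 * F n + 2 * (if n = 0 then 1 else 0) + F n = (if n = 0 then 2 else 0) - F n
  split <;> ring

/-- Binomial orthogonality. -/
lemma orth (n j : ℕ) :
    ∑ k ∈ range (n + 1), (-1 : ℚ) ^ k * n.choose k * k.choose j
      = if j = n then (-1 : ℚ) ^ n else 0 := by
  rcases le_or_gt j n with hj | hj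
  · have hsplit := Finset.sum_range_add_sum_Ico
      (fun k => (-1 : ℚ) ^ k * (n.choose k : ℚ) * (k.choose j : ℚ))
      (show j ≤ n + 1 by omega)
    have hlow : ∑ k ∈ range j, (-1 : ℚ) ^ k * (n.choose k : ℚ) * (k.choose j : ℚ) = 0 := by
      apply Finset.sum_eq_zero
      intro k hk
      rw [Nat.choose_eq_zero_of_lt (Finset.mem_range.1 hk)]
      simp
    have hIco : ∑ k ∈ Ico j (n + 1), (-1 : ℚ) ^ k * (n.choose k : ℚ) * (k.choose j : ℚ)
        = ∑ i ∈ range (n + 1 - j),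
            (-1 : ℚ) ^ (j + i) * (n.choose (j + i) : ℚ) * ((j + i).choose j : ℚ) := by
      rw [Finset.sum_Ico_eq_sum_range]
    have hterm : ∀ i, i ≤ n - j → (n.choose (j + i) : ℚ) * ((j + i).choose j : ℚ)
        = (n.choose j : ℚ) * ((n - j).choose i : ℚ) := by
      intro i hi
      have hle : j + i ≤ n := by omega
      have hnat := Nat.choose_mul (n := n) (Nat.le_add_right j i)
      rw [show j + i - j = i by omega] at hnat
      exact_mod_cast congrArg (fun z : ℕ => (z : ℚ)) hnat
    have hkey : ∑ i ∈ range (n + 1 - j),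
          (-1 : ℚ) ^ (j + i) * (n.choose (j + i) : ℚ) * ((j + i).choose j : ℚ)
        = (-1 : ℚ) ^ j * (n.choose j : ℚ) *
            ∑ i ∈ range (n - j + 1), (-1 : ℚ) ^ i * ((n - j).choose i : ℚ) := by
      rw [show n + 1 - j = n - j + 1 by omega, Finset.mul_sum]
      refine Finset.sum_congr rfl fun i hi => ?_
      have hi' : i ≤ n - j := by have := Finset.mem_range.1 hi; omega
      rw [pow_add, mul_assoc ((-1 : ℚ) ^ j * (-1 : ℚ) ^ i), hterm i hi']
      ring
    have halt : ∑ i ∈ range (n - j + 1), (-1 : ℚ) ^ i * ((n - j).choose i : ℚ)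
        = if n - j = 0 then 1 else 0 := by
      have h := congrArg (fun z : ℤ => (z : ℚ))
        (Int.alternating_sum_range_choose (n := n - j))
      push_cast at h
      convert h using 2
    rw [← hsplit, hlow, zero_add, hIco, hkey, halt]
    rcases eq_or_lt_of_le hj with h | h
    · subst h
      simp
    · rw [if_neg (by omega), if_neg (by omega)]
      ring
  · rw [if_neg (by omega)]
    apply Finset.sum_eq_zero
    intro k hk
    rw [Nat.choose_eq_zero_of_lt (show k < j by have := Finset.mem_range.1 hk; omega)]
    simp

/-- The inverted convolution identity: the EGF satisfies `(1+e⁻ˣ)·G(x)... `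
namely `∑ (-1)^k C(n,k) F k = 2 - (-1)^n F n`. -/
lemma conv' (n : ℕ) :
    ∑ k ∈ range (n + 1), (-1 : ℚ) ^ k * n.choose k * F k = 2 - (-1 : ℚ) ^ n * F n := by
  have h1 : ∀ j ∈ range (n + 1), (if j = 0 then (2 : ℚ) else 0) - F j
      = ∑ k ∈ range (n + 1), (j.choose k : ℚ) * F k := by
    intro j hj
    rw [← conv j]
    apply Finset.sum_subset
      (Finset.range_subset_range.2 (show j + 1 ≤ n + 1 by have := Finset.mem_range.1 hj; omega))
    intro x _ hx
    rw [Nat.choose_eq_zero_of_lt (by simpa using hx)]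
    simp
  have key : ∑ j ∈ range (n + 1), (-1 : ℚ) ^ j * n.choose j *
      ((if j = 0 then (2 : ℚ) else 0) - F j) = (-1 : ℚ) ^ n * F n := by
    calc ∑ j ∈ range (n + 1), (-1 : ℚ) ^ j * n.choose j *
          ((if j = 0 then (2 : ℚ) else 0) - F j)
        = ∑ j ∈ range (n + 1), ∑ k ∈ range (n + 1),
            ((-1 : ℚ) ^ j * n.choose j * j.choose k) * F k := by
          refine Finset.sum_congr rfl fun j hj => ?_
          rw [h1 j hj, Finset.mul_sum]
          exact Finset.sum_congr rfl fun k _ => by ring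
      _ = ∑ k ∈ range (n + 1),
            (∑ j ∈ range (n + 1), (-1 : ℚ) ^ j * n.choose j * j.choose k) * F k := by
          rw [Finset.sum_comm]
          exact Finset.sum_congr rfl fun k _ => by rw [Finset.sum_mul]
      _ = ∑ k ∈ range (n + 1), (if k = n then (-1 : ℚ) ^ n else 0) * F k := by
          exact Finset.sum_congr rfl fun k _ => by rw [orth]
      _ = (-1 : ℚ) ^ n * F n := by
          rw [Finset.sum_eq_single n]
          · simp
          · intro b _ hb
            rw [if_neg hb, zero_mul]
          · intro h
            exact absurd (Finset.self_mem_range_succ n) h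
  have expand : ∑ j ∈ range (n + 1), (-1 : ℚ) ^ j * n.choose j *
      ((if j = 0 then (2 : ℚ) else 0) - F j)
      = 2 - ∑ j ∈ range (n + 1), (-1 : ℚ) ^ j * n.choose j * F j := by
    have : ∀ j ∈ range (n + 1), (-1 : ℚ) ^ j * n.choose j *
        ((if j = 0 then (2 : ℚ) else 0) - F j)
        = (if j = 0 then (2 : ℚ) else 0) - (-1 : ℚ) ^ j * n.choose j * F j := by
      intro j _
      split
      · rename_i h; subst h; simp
      · ring
    rw [Finset.sum_congr rfl this, Finset.sum_sub_distrib, Finset.sum_ite_eq'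
      (range (n + 1)) 0 (fun _ => (2 : ℚ))]
    simp
  rw [expand] at key
  linarith [key]

/-- For `n ≥ 1`, `F n + (-1)^n F n = 0`. -/
lemma F_add_neg (n : ℕ) (hn : 1 ≤ n) : F n + (-1 : ℚ) ^ n * F n = 0 := by
  induction n using Nat.strong_induction_on with
  | _ n ih =>
    have hA := conv n
    have hB := conv' n
    rw [if_neg (by omega)] at hA
    have hsum : ∑ k ∈ range (n + 1), ((n.choose k : ℚ) * F k
        + (-1 : ℚ) ^ k * n.choose k * F k) = 2 - F n - (-1 : ℚ) ^ n * F n := by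
      rw [Finset.sum_add_distrib, hA, hB]
      ring
    have hmain : ∑ k ∈ range (n + 1), ((n.choose k : ℚ) * F k
        + (-1 : ℚ) ^ k * n.choose k * F k)
        = 2 + (F n + (-1 : ℚ) ^ n * F n) := by
      rw [Finset.sum_range_succ]
      have hrest : ∑ k ∈ range n, ((n.choose k : ℚ) * F k
          + (-1 : ℚ) ^ k * n.choose k * F k) = 2 := by
        rw [Finset.sum_eq_single 0]
        · norm_num [F_zero]
        · intro k hk hk0
          have h1 : 1 ≤ k := Nat.one_le_iff_ne_zero.2 hk0
          have h2 : F k + (-1 : ℚ) ^ k * F k = 0 := ih k (Finset.mem_range.1 hk) h1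
          linear_combination (n.choose k : ℚ) * h2
        · intro h
          exact absurd (Finset.mem_range.2 (by omega)) h
      rw [hrest]
      simp [Nat.choose_self]
    rw [hmain] at hsum
    linarith

lemma F_even_eq_zero (n : ℕ) (hn : 1 ≤ n) (he : Even n) : F n = 0 := by
  have := F_add_neg n hn
  rw [he.neg_one_pow] at this
  linarith

end Stirling2Aux

/-- For `k ≥ 1`, `∑_{m=1}^{2k+1} (-1)^m (m-1)!/2^{m-1} S(2k+1,m) = 0`. -/
theorem sum_stirling2_odd_eq_zero (k : ℕ) (hk : 1 ≤ k) :
    ∑ m ∈ Finset.Icc 1 (2 * k + 1),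
        (-1 : ℚ) ^ m * ((m - 1).factorial : ℚ) / 2 ^ (m - 1) * stirling2 (2 * k + 1) m
      = 0 := by
  open Finset Stirling2Aux in
  have h2k : 1 ≤ 2 * k := by omega
  have hF : F (2 * k) = 0 := F_even_eq_zero _ h2k (even_two_mul k)
  rw [← Finset.Ico_add_one_right_eq_Icc, Finset.sum_Ico_eq_sum_range]
  have hr : 2 * k + 1 + 1 - 1 = 2 * k + 1 := by omega
  rw [hr]
  have hterm : ∀ i : ℕ,
      (-1 : ℚ) ^ (1 + i) * (((1 + i - 1).factorial : ℚ)) / 2 ^ (1 + i - 1)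
          * stirling2 (2 * k + 1) (1 + i)
      = -(c i * ((i : ℚ) + 1) * stirling2 (2 * k) (i + 1)) - c i * stirling2 (2 * k) i := by
    intro i
    have h1 : 1 + i - 1 = i := by omega
    have h2 : 1 + i = i + 1 := by omega
    rw [h1, h2, stirling2_succ_succ]
    simp only [c]
    push_cast
    ring
  rw [Finset.sum_congr rfl fun i _ => hterm i, Finset.sum_sub_distrib]
  have hneg : ∑ i ∈ range (2 * k + 1), -(c i * ((i : ℚ) + 1) * stirling2 (2 * k) (i + 1))
      = -∑ i ∈ range (2 * k + 1), c i * ((i : ℚ) + 1) * stirling2 (2 * k) (i + 1) := by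
    rw [← Finset.sum_neg_distrib]
  rw [hneg, sum_c_mul_succ, if_neg (by omega)]
  have hFdef : ∑ i ∈ range (2 * k + 1), c i * ((stirling2 (2 * k) i : ℕ) : ℚ) = F (2 * k) := rfl
  rw [hFdef, hF]
  ring
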